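/- Let (g,⟨·,·⟩) be a double extension of (g₀,⟨·,·⟩₀) by (D,K,L) with (g₀,⟨·,·⟩₀) Ricci flat and Δ = 0. Then (g,⟨·,·⟩) is Ricci-parallel. Moreover, if additionally Γ ≠ 0, then Ric ≠ 0 and Ric² = 0. -/

import Mathlib

/-- The Ricci tensor of a left-invariant metric determined by a connection `nabla`:
`ric(x,y) = tr (ξ ↦ ∇_ξ ∇_x y − ∇_x ∇_ξ y − ∇_{[ξ,x]} y)`. -/
noncomputable def ricci {g : Type*} [LieRing g] [LieAlgebra ℝ g]
    (nabla : g →ₗ[ℝ] g →ₗ[ℝ] g) (x y : g) : ℝ :=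
  LinearMap.trace ℝ g
    (nabla.flip (nabla x y) - nabla x ∘ₗ nabla.flip y +
      nabla.flip y ∘ₗ (LieAlgebra.ad ℝ g x : g →ₗ[ℝ] g))

/-- `nabla` is the Levi-Civita connection of the metric Lie algebra `(g, B)`
(Koszul formula). -/
def IsLeviCivita {g : Type*} [LieRing g] [LieAlgebra ℝ g]
    (B : g →ₗ[ℝ] g →ₗ[ℝ] ℝ) (nabla : g →ₗ[ℝ] g →ₗ[ℝ] g) : Prop :=
  ∀ x y z : g, 2 * B (nabla x y) z = B ⁅x, y⁆ z - B ⁅y, z⁆ x + B ⁅z, x⁆ y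

/-- Ricci-parallel: `(∇_x ric)(y,z) = −ric(∇_x y, z) − ric(y, ∇_x z) = 0`. -/
noncomputable def IsRicciParallel {g : Type*} [LieRing g] [LieAlgebra ℝ g]
    (nabla : g →ₗ[ℝ] g →ₗ[ℝ] g) : Prop :=
  ∀ x y z : g, ricci nabla (nabla x y) z + ricci nabla y (nabla x z) = 0



open LinearMap

lemma trace_eq_of_pairing {V : Type*} [AddCommGroup V] [Module ℝ V] [FiniteDimensional ℝ V]
    (B : V →ₗ[ℝ] V →ₗ[ℝ] ℝ) (hnd : ∀ e : V, (∀ f : V, B e f = 0) → e = 0)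
    (P Q : V →ₗ[ℝ] V) (h : ∀ e f : V, B (P e) f = B e (Q f)) :
    LinearMap.trace ℝ V P = LinearMap.trace ℝ V Q := by
  have hnd' : LinearMap.BilinForm.Nondegenerate B :=
    LinearMap.BilinForm.Nondegenerate.ofSeparatingLeft (fun e he => hnd e he)
  set E := LinearMap.BilinForm.toDual B hnd' with hE
  have key : P = (E.symm.conj) ((Module.Dual.transpose (R := ℝ)) Q) := by
    ext e
    have h2 : ∀ f, B (P e) f = B ((E.symm.conj ((Module.Dual.transpose (R := ℝ)) Q)) e) f := by
      intro f
      rw [LinearEquiv.conj_apply]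
      simp only [LinearEquiv.symm_symm, LinearMap.comp_apply, LinearEquiv.coe_coe]
      rw [hE, LinearMap.BilinForm.apply_toDual_symm_apply (hB := hnd')]
      rw [Module.Dual.transpose_apply]
      exact h e f
    have h3 := hnd (P e - (E.symm.conj ((Module.Dual.transpose (R := ℝ)) Q)) e)
      (by intro f; simp [map_sub, LinearMap.sub_apply, h2 f])
    exact sub_eq_zero.mp h3
  rw [key, LinearMap.trace_conj', LinearMap.trace_transpose']

lemma trace_real (f : ℝ →ₗ[ℝ] ℝ) : LinearMap.trace ℝ ℝ f = f 1 := by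
  have hf : f = f 1 • LinearMap.id := by
    ext x
    simp [mul_comm]
  rw [hf, map_smul, LinearMap.trace_id]
  simp

lemma trace_prod_decomp {M N : Type*} [AddCommGroup M] [Module ℝ M] [FiniteDimensional ℝ M]
    [AddCommGroup N] [Module ℝ N] [FiniteDimensional ℝ N] (f : (M × N) →ₗ[ℝ] (M × N)) :
    LinearMap.trace ℝ (M × N) f
      = LinearMap.trace ℝ M (LinearMap.fst ℝ M N ∘ₗ f ∘ₗ LinearMap.inl ℝ M N)
        + LinearMap.trace ℝ N (LinearMap.snd ℝ M N ∘ₗ f ∘ₗ LinearMap.inr ℝ M N) := by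
  have hf : f = (LinearMap.inl ℝ M N ∘ₗ (LinearMap.fst ℝ M N ∘ₗ f))
      + (LinearMap.inr ℝ M N ∘ₗ (LinearMap.snd ℝ M N ∘ₗ f)) := by
    ext x <;> simp
  have e1 : LinearMap.trace ℝ (M × N) (LinearMap.inl ℝ M N ∘ₗ (LinearMap.fst ℝ M N ∘ₗ f))
      = LinearMap.trace ℝ M (LinearMap.fst ℝ M N ∘ₗ f ∘ₗ LinearMap.inl ℝ M N) := by
    rw [LinearMap.trace_comp_comm' (LinearMap.fst ℝ M N ∘ₗ f) (LinearMap.inl ℝ M N),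
      LinearMap.comp_assoc]
  have e2 : LinearMap.trace ℝ (M × N) (LinearMap.inr ℝ M N ∘ₗ (LinearMap.snd ℝ M N ∘ₗ f))
      = LinearMap.trace ℝ N (LinearMap.snd ℝ M N ∘ₗ f ∘ₗ LinearMap.inr ℝ M N) := by
    rw [LinearMap.trace_comp_comm' (LinearMap.snd ℝ M N ∘ₗ f) (LinearMap.inr ℝ M N),
      LinearMap.comp_assoc]
  rw [← e1, ← e2, ← map_add]
  exact congrArg _ hf

set_option maxHeartbeats 1600000 in
/-- If the base of a double extension is Ricci flat and Δ = 0, the double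
extension is Ricci-parallel; if moreover Γ ≠ 0 then Ric ≠ 0 and Ric² = 0. -/
theorem stmt_16 (g₀ : Type*) [LieRing g₀] [LieAlgebra ℝ g₀] [FiniteDimensional ℝ g₀]
    (B₀ : g₀ →ₗ[ℝ] g₀ →ₗ[ℝ] ℝ)
    (hsymm₀ : ∀ e f : g₀, B₀ e f = B₀ f e)
    (hnd₀ : ∀ e : g₀, (∀ f : g₀, B₀ e f = 0) → e = 0)
    (nabla₀ : g₀ →ₗ[ℝ] g₀ →ₗ[ℝ] g₀)
    (hLC₀ : IsLeviCivita B₀ nabla₀)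
    (D K Dstar : g₀ →ₗ[ℝ] g₀) (L : g₀)
    (hD : ∀ e f : g₀, D ⁅e, f⁆ = ⁅D e, f⁆ + ⁅e, D f⁆)
    (hDstar : ∀ e f : g₀, B₀ (Dstar e) f = B₀ e (D f))
    (hKskew : ∀ e f : g₀, B₀ (K e) f = -(B₀ e (K f)))
    (hJacobi : ∀ e f : g₀, B₀ L ⁅e, f⁆ = B₀ ((K ∘ₗ D + Dstar ∘ₗ K) e) f)
    (g : Type*) [LieRing g] [LieAlgebra ℝ g] [FiniteDimensional ℝ g]
    (u v : g) (ι : g₀ →ₗ[ℝ] g)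
    (hspan : ∀ w : g, ∃ (a b : ℝ) (e : g₀), w = a • u + b • v + ι e)
    (hbr1 : ∀ e : g₀, ⁅u, ι e⁆ = ι (D e) + (B₀ L e) • v)
    (hbr2 : ∀ e f : g₀, ⁅ι e, ι f⁆ = ι ⁅e, f⁆ + (B₀ (K e) f) • v)
    (hbr3 : ∀ x : g, ⁅x, v⁆ = 0)
    (B : g →ₗ[ℝ] g →ₗ[ℝ] ℝ)
    (hB : ∀ (a b a' b' : ℝ) (e e' : g₀),
      B (a • u + b • v + ι e) (a' • u + b' • v + ι e')
        = a * b' + a' * b + B₀ e e')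
    (hnd : ∀ w : g, (∀ z : g, B w z = 0) → w = 0)
    (nabla : g →ₗ[ℝ] g →ₗ[ℝ] g)
    (hLC : IsLeviCivita B nabla)
    (Z₀ : g₀)
    (hZ : ∀ f : g₀, B₀ Z₀ f = LinearMap.trace ℝ g₀ (LieAlgebra.ad ℝ g₀ f : g₀ →ₗ[ℝ] g₀))
    (S : g₀ →ₗ[ℝ] g₀ →ₗ[ℝ] g₀)
    (hS : ∀ e f f' : g₀, B₀ (S e f) f' = B₀ e ⁅f, f'⁆)
    (Δ : g₀)
    (hΔ : ∀ e : g₀, B₀ Δ e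
      = -(1/2) * LinearMap.trace ℝ g₀ ((D + Dstar) ∘ₗ (LieAlgebra.ad ℝ g₀ e : g₀ →ₗ[ℝ] g₀))
        + (1/2) * B₀ ((D - K) Z₀) e - (1/4) * LinearMap.trace ℝ g₀ (K ∘ₗ S e))
    (Γ : ℝ)
    (hΓ : Γ = -(1/2) * LinearMap.trace ℝ g₀ (D ∘ₗ D)
        - (1/2) * LinearMap.trace ℝ g₀ (Dstar ∘ₗ D)
        - (1/4) * LinearMap.trace ℝ g₀ (K ∘ₗ K) + B₀ L Z₀)
    (Ric : g →ₗ[ℝ] g)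
    (hRic : ∀ x y : g, B (Ric x) y = ricci nabla x y)
    (Ric₀ : g₀ →ₗ[ℝ] g₀)
    (hRic₀ : ∀ e f : g₀, B₀ (Ric₀ e) f = ricci nabla₀ e f)
    (hflat : ∀ e f : g₀, ricci nabla₀ e f = 0)
    (hΔ0 : Δ = 0) :
    IsRicciParallel nabla ∧ (Γ ≠ 0 → Ric ≠ 0 ∧ Ric ∘ₗ Ric = 0) := by
  classical
  -- ### atoms for B on g
  have Buu : B u u = 0 := by
    have h := hB 1 0 1 0 0 0
    simpa using h
  have Buv : B u v = 1 := by
    have h := hB 1 0 0 1 0 0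
    simpa using h
  have Bvu : B v u = 1 := by
    have h := hB 0 1 1 0 0 0
    simpa using h
  have Bvv : B v v = 0 := by
    have h := hB 0 1 0 1 0 0
    simpa using h
  have Buι : ∀ e, B u (ι e) = 0 := by
    intro e
    have h := hB 1 0 0 0 0 e
    simpa using h
  have Bιu : ∀ e, B (ι e) u = 0 := by
    intro e
    have h := hB 0 0 1 0 e 0
    simpa using h
  have Bvι : ∀ e, B v (ι e) = 0 := by
    intro e
    have h := hB 0 1 0 0 0 e
    simpa using h
  have Bιv : ∀ e, B (ι e) v = 0 := by
    intro e
    have h := hB 0 0 0 1 e 0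
    simpa using h
  have Bιι : ∀ e f, B (ι e) (ι f) = B₀ e f := by
    intro e f
    have h := hB 0 0 0 0 e f
    simpa using h
  -- extensionality from nondegeneracy
  have eqg' : ∀ x y : g, (∀ z, B x z = B y z) → x = y := by
    intro x y h
    refine sub_eq_zero.mp (hnd _ ?_)
    intro z
    simp [map_sub, LinearMap.sub_apply, h z]
  have eqg : ∀ x y : g, B x u = B y u → B x v = B y v →
      (∀ e, B x (ι e) = B y (ι e)) → x = y := by
    intro x y h1 h2 h3
    refine eqg' x y ?_
    intro z
    obtain ⟨a, b, e, rfl⟩ := hspan z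
    simp only [map_add, map_smul, smul_eq_mul, h1, h2, h3 e]
  -- bracket atoms
  have br_vx : ∀ x : g, ⁅v, x⁆ = 0 := by
    intro x
    rw [← lie_skew, hbr3, neg_zero]
  have br_ιu : ∀ e, ⁅ι e, u⁆ = -(ι (D e) + (B₀ L e) • v) := by
    intro e
    rw [← lie_skew, hbr1]
  -- Koszul
  have kos : ∀ x y z : g, B (nabla x y) z = (B ⁅x, y⁆ z - B ⁅y, z⁆ x + B ⁅z, x⁆ y) / 2 := by
    intro x y z
    have h := hLC x y z
    linarith
  -- brackets have no u-component
  have Bbrv : ∀ x y : g, B ⁅x, y⁆ v = 0 := by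
    intro x y
    obtain ⟨a, b, e, rfl⟩ := hspan x
    obtain ⟨a', b', e', rfl⟩ := hspan y
    simp only [add_lie, lie_add, smul_lie, lie_smul, lie_self, hbr3, br_vx, hbr1, hbr2, br_ιu,
      smul_zero, add_zero, zero_add, map_add, map_smul, map_neg, smul_eq_mul,
      LinearMap.add_apply, LinearMap.neg_apply, LinearMap.smul_apply, LinearMap.zero_apply,
      map_zero, Bιv, Bvv]
    ring
  have Bnv : ∀ x y : g, B (nabla x y) v = 0 := by
    intro x y
    rw [kos]
    simp [hbr3, br_vx, Bbrv, Bvv]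
  -- nabla with v
  have nvl : ∀ y : g, nabla v y = 0 := by
    intro y
    refine eqg' _ 0 ?_
    intro z
    rw [kos]
    simp [br_vx, hbr3, Bbrv]
  have nvr : ∀ x : g, nabla x v = 0 := by
    intro x
    refine eqg' _ 0 ?_
    intro z
    rw [kos]
    simp [br_vx, hbr3, Bbrv]
  -- pairing lemmas on g₀
  have pD : ∀ x w : g₀, B₀ (D x) w = B₀ x (Dstar w) := by
    intro x w
    rw [hsymm₀, ← hDstar, hsymm₀]
  have pK : ∀ x w : g₀, B₀ x (K w) = -(B₀ (K x) w) := by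
    intro x w
    rw [hKskew x w, neg_neg]
  -- the operators A and Ab
  set A : g₀ →ₗ[ℝ] g₀ := (1/2 : ℝ) • (D - Dstar - K) with hAdef
  set Ab : g₀ →ₗ[ℝ] g₀ := (1/2 : ℝ) • (D + Dstar + K) with hAbdef
  have Aapp : ∀ x, A x = (1/2 : ℝ) • (D x - Dstar x - K x) := by
    intro x; simp [hAdef]
  have Abapp : ∀ x, Ab x = (1/2 : ℝ) • (D x + Dstar x + K x) := by
    intro x; simp [hAbdef]
  -- the connection table
  have n3 : nabla u u = -(ι L) := by
    refine eqg _ _ ?_ ?_ ?_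
    · rw [kos]
      simp [lie_self, Bιu]
    · simp [Bnv, Bιv]
    · intro e
      rw [kos]
      simp only [lie_self, hbr1, br_ιu, map_zero, LinearMap.zero_apply, map_add, map_neg,
        map_smul, smul_eq_mul, LinearMap.add_apply, LinearMap.neg_apply, LinearMap.smul_apply,
        Bιu, Bvu, Bιι, Bιv, Bvv, Buu, Buv, Buι]
      ring
  have n4 : ∀ f : g₀, nabla u (ι f) = ι (A f) + (B₀ L f) • v := by
    intro f
    refine eqg _ _ ?_ ?_ ?_
    · rw [kos]
      simp only [hbr1, br_ιu, lie_self, map_add, map_neg, map_smul, smul_eq_mul,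
        LinearMap.add_apply, LinearMap.neg_apply, LinearMap.smul_apply, map_zero,
        LinearMap.zero_apply, Bιu, Bvu, Buu, Buv, Buι, Bιv, Bvv, Bιι]
      ring
    · rw [kos]
      simp only [hbr1, hbr3, br_vx, lie_self, map_add, map_smul, smul_eq_mul, map_zero,
        LinearMap.add_apply, LinearMap.smul_apply, LinearMap.zero_apply,
        Bιv, Bvv, Buv, Buu]
      ring
    · intro h
      rw [kos]
      simp only [hbr1, hbr2, br_ιu, map_add, map_neg, map_smul, smul_eq_mul,
        LinearMap.add_apply, LinearMap.neg_apply, LinearMap.smul_apply,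
        Bιu, Bvu, Bvι, Bιι, Bιv, Bvv, Buu, Buv, Buι, Aapp, map_sub, LinearMap.sub_apply,
        smul_eq_mul]
      rw [pD f h, pD h f, hsymm₀ h (Dstar f)]
      ring
  have n5 : ∀ e : g₀, nabla (ι e) u = -(ι (Ab e)) := by
    intro e
    refine eqg _ _ ?_ ?_ ?_
    · rw [kos]
      simp only [br_ιu, hbr1, lie_self, map_add, map_neg, map_smul, smul_eq_mul, map_zero,
        LinearMap.add_apply, LinearMap.neg_apply, LinearMap.smul_apply, LinearMap.zero_apply,
        Bιu, Bvu, Bvv, Bvι, Buu, Buv, Buι, Bιv, Bιι]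
      ring
    · simp [Bnv, Bιv]
    · intro h
      rw [kos]
      simp only [br_ιu, hbr1, hbr2, map_add, map_neg, map_smul, smul_eq_mul,
        LinearMap.add_apply, LinearMap.neg_apply, LinearMap.smul_apply,
        Bιu, Bvu, Bvv, Bvι, Buu, Buv, Buι, Bιv, Bιι, Abapp, LinearMap.sub_apply]
      rw [pD h e, hsymm₀ h (Dstar e), hKskew h e, hsymm₀ h (K e)]
      ring
  have n6 : ∀ e f : g₀, nabla (ι e) (ι f) = ι (nabla₀ e f) + (B₀ (Ab e) f) • v := by
    intro e f
    refine eqg _ _ ?_ ?_ ?_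
    · rw [kos]
      simp only [br_ιu, hbr1, hbr2, map_add, map_neg, map_smul, smul_eq_mul,
        LinearMap.add_apply, LinearMap.neg_apply, LinearMap.smul_apply,
        Bιu, Bvu, Bvv, Bvι, Buu, Buv, Buι, Bιv, Bιι, Abapp, LinearMap.sub_apply]
      rw [pD f e, hsymm₀ f (Dstar e)]
      ring
    · simp only [Bnv, map_add, map_smul, smul_eq_mul, LinearMap.add_apply,
        LinearMap.smul_apply, Bιv, Bvv]
      ring
    · intro h
      rw [kos]
      simp only [br_ιu, hbr1, hbr2, map_add, map_neg, map_smul, smul_eq_mul,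
        LinearMap.add_apply, LinearMap.neg_apply, LinearMap.smul_apply,
        Bιu, Bvu, Bvv, Bvι, Buu, Buv, Buι, Bιv, Bιι]
      have hk := hLC₀ e f h
      linarith
  -- ### the linear equivalence g ≃ ℝ × ℝ × g₀
  set φ : (ℝ × ℝ × g₀) →ₗ[ℝ] g :=
    (LinearMap.fst ℝ ℝ (ℝ × g₀)).smulRight u
      + ((LinearMap.fst ℝ ℝ g₀) ∘ₗ (LinearMap.snd ℝ ℝ (ℝ × g₀))).smulRight v
      + ι ∘ₗ ((LinearMap.snd ℝ ℝ g₀) ∘ₗ (LinearMap.snd ℝ ℝ (ℝ × g₀))) with hφdef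
  have φapp : ∀ (a b : ℝ) (e : g₀), φ (a, b, e) = a • u + b • v + ι e := by
    intro a b e
    simp [hφdef]
  have φbij : Function.Bijective φ := by
    constructor
    · rw [injective_iff_map_eq_zero]
      rintro ⟨a, b, e⟩ hp
      rw [φapp] at hp
      have ha : a = 0 := by
        have h := congrArg (fun w => B w v) hp
        simpa [map_add, map_smul, smul_eq_mul, Buv, Bvv, Bιv] using h
      have hb : b = 0 := by
        have h := congrArg (fun w => B w u) hp
        simpa [map_add, map_smul, smul_eq_mul, Buu, Bvu, Bιu] using h
      have he : e = 0 := by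
        refine hnd₀ e ?_
        intro f
        have h := congrArg (fun w => B w (ι f)) hp
        simpa [map_add, map_smul, smul_eq_mul, Buι, Bvι, Bιι] using h
      simp [ha, hb, he, Prod.ext_iff]
    · intro w
      obtain ⟨a, b, e, rfl⟩ := hspan w
      exact ⟨(a, b, e), φapp a b e⟩
  set φe : (ℝ × ℝ × g₀) ≃ₗ[ℝ] g := LinearEquiv.ofBijective φ φbij with hφe
  have φeapp : ∀ (a b : ℝ) (e : g₀), φe (a, b, e) = a • u + b • v + ι e := by
    intro a b e
    rw [hφe]
    exact φapp a b e
  have φesymm : ∀ (a b : ℝ) (e : g₀), φe.symm (a • u + b • v + ι e) = (a, b, e) := by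
    intro a b e
    rw [LinearEquiv.symm_apply_eq]
    exact (φeapp a b e).symm
  have symm_u : φe.symm u = (1, 0, 0) := by
    have h := φesymm 1 0 0
    simpa using h
  have symm_v : φe.symm v = (0, 1, 0) := by
    have h := φesymm 0 1 0
    simpa using h
  have symm_ι : ∀ e, φe.symm (ι e) = (0, 0, e) := by
    intro e
    have h := φesymm 0 0 e
    simpa using h
  have decomp : ∀ w : g, w = (φe.symm w).1 • u + (φe.symm w).2.1 • v + ι (φe.symm w).2.2 := by
    intro w
    conv_lhs => rw [← φe.apply_symm_apply w]
    obtain ⟨a, b, e⟩ := φe.symm w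
    exact φeapp a b e
  set π : g →ₗ[ℝ] g₀ :=
    (LinearMap.snd ℝ ℝ g₀) ∘ₗ (LinearMap.snd ℝ ℝ (ℝ × g₀)) ∘ₗ (φe.symm : g →ₗ[ℝ] (ℝ × ℝ × g₀))
    with hπdef
  have πapp : ∀ w : g, π w = (φe.symm w).2.2 := by
    intro w
    simp [hπdef]
  have πu : π u = 0 := by rw [πapp, symm_u]
  have πv : π v = 0 := by rw [πapp, symm_v]
  have πι : ∀ e, π (ι e) = e := by intro e; rw [πapp, symm_ι]
  -- ### the trace formula
  have trace_formula : ∀ T : g →ₗ[ℝ] g, LinearMap.trace ℝ g T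
      = (φe.symm (T u)).1 + ((φe.symm (T v)).2.1 + LinearMap.trace ℝ g₀ (π ∘ₗ T ∘ₗ ι)) := by
    intro T
    have h0 : LinearMap.trace ℝ g T = LinearMap.trace ℝ (ℝ × ℝ × g₀) (φe.symm.conj T) :=
      (LinearMap.trace_conj' T φe.symm).symm
    rw [h0, trace_prod_decomp, trace_prod_decomp, trace_real, trace_real]
    congr 1
    · show (φe.symm.conj T (((1 : ℝ), ((0 : ℝ), (0 : g₀))))).1 = (φe.symm (T u)).1
      rw [LinearEquiv.conj_apply]
      simp only [LinearMap.comp_apply, LinearEquiv.coe_coe, LinearEquiv.symm_symm]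
      rw [φeapp]
      simp
    congr 1
    · show (φe.symm.conj T (((0 : ℝ), ((1 : ℝ), (0 : g₀))))).2.1 = (φe.symm (T v)).2.1
      rw [LinearEquiv.conj_apply]
      simp only [LinearMap.comp_apply, LinearEquiv.coe_coe, LinearEquiv.symm_symm]
      rw [φeapp]
      simp
    · congr 1
      ext e
      show ((φe.symm.conj T) (((0 : ℝ), ((0 : ℝ), e)))).2.2 = π (T (ι e))
      rw [LinearEquiv.conj_apply, πapp]
      simp only [LinearMap.comp_apply, LinearEquiv.coe_coe, LinearEquiv.symm_symm]
      rw [φeapp]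
      simp
  -- ### reduction of ricci to the g₀ block
  set Top : g → g → (g →ₗ[ℝ] g) := fun x y =>
    nabla.flip (nabla x y) - nabla x ∘ₗ nabla.flip y
      + nabla.flip y ∘ₗ (LieAlgebra.ad ℝ g x : g →ₗ[ℝ] g) with hTop
  have ricci_def : ∀ x y : g, ricci nabla x y = LinearMap.trace ℝ g (Top x y) := by
    intro x y
    rfl
  have Topapp : ∀ x y z : g, Top x y z
      = nabla z (nabla x y) - nabla x (nabla z y) + nabla ⁅x, z⁆ y := by
    intro x y z
    simp [hTop, LinearMap.sub_apply, LinearMap.add_apply, LinearMap.comp_apply,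
      LinearMap.flip_apply, LieAlgebra.ad_apply]
  have fst_eq : ∀ w : g, (φe.symm w).1 = B w v := by
    intro w
    conv_rhs => rw [decomp w]
    simp only [map_add, map_smul, LinearMap.add_apply, LinearMap.smul_apply, smul_eq_mul,
      Buv, Bvv, Bιv]
    ring
  have Tu_fst : ∀ x y : g, (φe.symm (Top x y u)).1 = 0 := by
    intro x y
    rw [fst_eq, Topapp]
    simp only [map_sub, map_add, LinearMap.sub_apply, LinearMap.add_apply, Bnv]
    ring
  have Tv0 : ∀ x y : g, Top x y v = 0 := by
    intro x y
    rw [Topapp, nvl (nabla x y), nvl y, hbr3 x]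
    simp only [map_zero, LinearMap.zero_apply, sub_zero, add_zero, sub_self, zero_add]
  have ric_g0 : ∀ x y : g, ricci nabla x y
      = LinearMap.trace ℝ g₀ (π ∘ₗ Top x y ∘ₗ ι) := by
    intro x y
    rw [ricci_def, trace_formula, Tu_fst, Tv0]
    simp
  -- ### g₀ side helpers
  have eqg₀ : ∀ x y : g₀, (∀ h : g₀, B₀ x h = B₀ y h) → x = y := by
    intro x y h
    refine sub_eq_zero.mp (hnd₀ _ ?_)
    intro f
    simp [map_sub, LinearMap.sub_apply, h f]
  have kos₀ : ∀ x y z : g₀, B₀ (nabla₀ x y) z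
      = (B₀ ⁅x, y⁆ z - B₀ ⁅y, z⁆ x + B₀ ⁅z, x⁆ y) / 2 := by
    intro x y z
    have h := hLC₀ x y z
    linarith
  have nab0 : ∀ e : g₀, nabla₀ e
      = (1/2 : ℝ) • ((LieAlgebra.ad ℝ g₀ e : g₀ →ₗ[ℝ] g₀) - S.flip e - S e) := by
    intro e
    ext f
    refine eqg₀ _ _ ?_
    intro h
    rw [kos₀]
    simp only [map_smul, map_sub, LinearMap.smul_apply, LinearMap.sub_apply,
      LieAlgebra.ad_apply, LinearMap.flip_apply, smul_eq_mul]
    rw [hS f e h, hS e f h, hsymm₀ ⁅f, h⁆ e, ← lie_skew h e, map_neg, LinearMap.neg_apply,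
      hsymm₀ ⁅e, h⁆ f]
    ring
  have flip0 : ∀ f : g₀, nabla₀.flip f
      = (-(1/2) : ℝ) • ((LieAlgebra.ad ℝ g₀ f : g₀ →ₗ[ℝ] g₀) + S f + S.flip f) := by
    intro f
    ext e
    refine eqg₀ _ _ ?_
    intro h
    rw [LinearMap.flip_apply, kos₀]
    simp only [map_smul, map_add, LinearMap.smul_apply, LinearMap.add_apply,
      LieAlgebra.ad_apply, LinearMap.flip_apply, smul_eq_mul]
    rw [hS f e h, hS e f h, hsymm₀ ⁅f, h⁆ e, ← lie_skew h e, map_neg, LinearMap.neg_apply,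
      hsymm₀ ⁅e, h⁆ f, ← lie_skew f e, map_neg, LinearMap.neg_apply]
    ring
  have tr_comm : ∀ P Q : g₀ →ₗ[ℝ] g₀,
      LinearMap.trace ℝ g₀ (P ∘ₗ Q) = LinearMap.trace ℝ g₀ (Q ∘ₗ P) := by
    intro P Q
    rw [← Module.End.mul_eq_comp, ← Module.End.mul_eq_comp, LinearMap.trace_mul_comm]
  have trpair := trace_eq_of_pairing B₀ hnd₀
  have pSskew : ∀ w a b : g₀, B₀ (S w a) b = -(B₀ a (S w b)) := by
    intro w a b
    rw [hS w a b, hsymm₀ a (S w b), hS w b a, show (⁅b, a⁆ : g₀) = -⁅a, b⁆ by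
      rw [← lie_skew], map_neg, neg_neg]
  have trS : ∀ w : g₀, LinearMap.trace ℝ g₀ (S w) = 0 := by
    intro w
    have h := trpair (S w) (-(S w)) (by
      intro e f
      rw [LinearMap.neg_apply, map_neg, ← pSskew])
    rw [map_neg] at h
    linarith
  have trad : ∀ w : g₀,
      LinearMap.trace ℝ g₀ (LieAlgebra.ad ℝ g₀ w : g₀ →ₗ[ℝ] g₀) = B₀ Z₀ w := by
    intro w
    exact (hZ w).symm
  have trSflip : ∀ w : g₀, LinearMap.trace ℝ g₀ (S.flip w) = B₀ Z₀ w := by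
    intro w
    have h := trpair (S.flip w) (LieAlgebra.ad ℝ g₀ w : g₀ →ₗ[ℝ] g₀) (by
      intro e f
      rw [LinearMap.flip_apply, hS e w f, LieAlgebra.ad_apply])
    rw [h, trad]
  have trFlip : ∀ w : g₀, LinearMap.trace ℝ g₀ (nabla₀.flip w) = -(B₀ Z₀ w) := by
    intro w
    rw [flip0 w, map_smul, map_add, map_add, trad, trS, trSflip]
    simp only [smul_eq_mul]
    ring
  have adD : ∀ f : g₀, (LieAlgebra.ad ℝ g₀ (D f) : g₀ →ₗ[ℝ] g₀)
      = D ∘ₗ (LieAlgebra.ad ℝ g₀ f : g₀ →ₗ[ℝ] g₀)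
        - (LieAlgebra.ad ℝ g₀ f : g₀ →ₗ[ℝ] g₀) ∘ₗ D := by
    intro f
    ext x
    simp only [LieAlgebra.ad_apply, LinearMap.sub_apply, LinearMap.comp_apply]
    rw [hD f x]
    abel
  have BZD : ∀ f : g₀, B₀ Z₀ (D f) = 0 := by
    intro f
    rw [hZ (D f), adD, map_sub, tr_comm]
    ring
  have pA : ∀ x w : g₀, B₀ (A x) w = -(B₀ x (A w)) := by
    intro x w
    rw [Aapp x, Aapp w]
    simp only [map_smul, map_sub, LinearMap.smul_apply, LinearMap.sub_apply, smul_eq_mul]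
    rw [pD x w, hDstar x w, hKskew x w]
    ring
  set Ab' : g₀ →ₗ[ℝ] g₀ := (1/2 : ℝ) • (D + Dstar - K) with hAb'def
  have Ab'app : ∀ x, Ab' x = (1/2 : ℝ) • (D x + Dstar x - K x) := by
    intro x
    simp [hAb'def]
  have pAb : ∀ x w : g₀, B₀ (Ab x) w = B₀ x (Ab' w) := by
    intro x w
    rw [Abapp x, Ab'app w]
    simp only [map_smul, map_add, map_sub, LinearMap.smul_apply, LinearMap.add_apply,
      LinearMap.sub_apply, smul_eq_mul]
    rw [pD x w, hDstar x w, hKskew x w]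
    ring
  -- monomial trace identities
  have tDsDs : LinearMap.trace ℝ g₀ (Dstar ∘ₗ Dstar) = LinearMap.trace ℝ g₀ (D ∘ₗ D) :=
    trpair _ _ (by intro e f; simp only [LinearMap.comp_apply, hDstar])
  have tDDs : LinearMap.trace ℝ g₀ (D ∘ₗ Dstar) = LinearMap.trace ℝ g₀ (Dstar ∘ₗ D) :=
    tr_comm D Dstar
  have tDK : LinearMap.trace ℝ g₀ (D ∘ₗ K) = LinearMap.trace ℝ g₀ (K ∘ₗ D) := tr_comm D K
  have tDsK : LinearMap.trace ℝ g₀ (Dstar ∘ₗ K) = -(LinearMap.trace ℝ g₀ (K ∘ₗ D)) := by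
    have h := trpair (Dstar ∘ₗ K) (-(K ∘ₗ D)) (by
      intro e f
      simp only [LinearMap.comp_apply, LinearMap.neg_apply]
      rw [hDstar, hKskew e (D f), map_neg])
    rw [h, map_neg]
  have tKDs : LinearMap.trace ℝ g₀ (K ∘ₗ Dstar) = -(LinearMap.trace ℝ g₀ (K ∘ₗ D)) := by
    rw [tr_comm K Dstar, tDsK]
  -- ### expansion lemmas
  have hAAb : A ∘ₗ Ab = (1/4 : ℝ) • (D ∘ₗ D + D ∘ₗ Dstar + D ∘ₗ K - Dstar ∘ₗ D
      - Dstar ∘ₗ Dstar - Dstar ∘ₗ K - K ∘ₗ D - K ∘ₗ Dstar - K ∘ₗ K) := by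
    ext x
    simp only [LinearMap.comp_apply, LinearMap.smul_apply, LinearMap.add_apply,
      LinearMap.sub_apply, Aapp, Abapp, map_smul, map_add, map_sub]
    module
  have trAAb : LinearMap.trace ℝ g₀ (A ∘ₗ Ab)
      = (1/2) * LinearMap.trace ℝ g₀ (K ∘ₗ D) - (1/4) * LinearMap.trace ℝ g₀ (K ∘ₗ K) := by
    rw [hAAb, map_smul]
    simp only [map_sub, map_add]
    rw [tDsDs, tDDs, tDK, tDsK, tKDs]
    simp only [smul_eq_mul]
    ring
  have hAbD : Ab ∘ₗ D = (1/2 : ℝ) • (D ∘ₗ D + Dstar ∘ₗ D + K ∘ₗ D) := by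
    ext x
    simp only [LinearMap.comp_apply, LinearMap.smul_apply, LinearMap.add_apply, Abapp]
  have trAbD : LinearMap.trace ℝ g₀ (Ab ∘ₗ D)
      = (1/2) * (LinearMap.trace ℝ g₀ (D ∘ₗ D) + LinearMap.trace ℝ g₀ (Dstar ∘ₗ D)
        + LinearMap.trace ℝ g₀ (K ∘ₗ D)) := by
    rw [hAbD, map_smul]
    simp only [map_add]
    simp only [smul_eq_mul]
  -- ### block (u,u)
  have block_uu : π ∘ₗ Top u u ∘ₗ ι = -(nabla₀.flip L) + A ∘ₗ Ab - Ab ∘ₗ D := by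
    ext h
    simp only [LinearMap.comp_apply, LinearMap.add_apply, LinearMap.sub_apply,
      LinearMap.neg_apply, LinearMap.flip_apply]
    have e1 : nabla (ι h) (nabla u u) = -(ι (nabla₀ h L) + (B₀ (Ab h)) L • v) := by
      rw [n3, map_neg, n6 h L]
    have e2 : nabla u (nabla (ι h) u) = -(ι (A (Ab h)) + (B₀ L) (Ab h) • v) := by
      rw [n5 h, map_neg, n4 (Ab h)]
    have e3 : nabla ⁅u, ι h⁆ u = -(ι (Ab (D h))) := by
      rw [hbr1 h, map_add nabla, LinearMap.add_apply, map_smul nabla, LinearMap.smul_apply,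
        n5 (D h), nvl u, smul_zero, add_zero]
    rw [Topapp, e1, e2, e3]
    simp only [map_neg, map_add, map_smul, map_sub, πι, πv, smul_zero, add_zero]
    abel
  have r_uu : ricci nabla u u = Γ := by
    rw [ric_g0, block_uu]
    simp only [map_sub, map_add, map_neg]
    rw [trFlip L, trAAb, trAbD, hΓ, hsymm₀ L Z₀]
    ring
  -- ### block (ιe, ιf)
  have block_ff : ∀ e f : g₀, π ∘ₗ Top (ι e) (ι f) ∘ₗ ι
      = nabla₀.flip (nabla₀ e f) - nabla₀ e ∘ₗ nabla₀.flip f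
        + nabla₀.flip f ∘ₗ (LieAlgebra.ad ℝ g₀ e : g₀ →ₗ[ℝ] g₀) := by
    intro e f
    ext h
    simp only [LinearMap.comp_apply, LinearMap.add_apply, LinearMap.sub_apply,
      LinearMap.flip_apply, LieAlgebra.ad_apply]
    have e1 : nabla (ι h) (nabla (ι e) (ι f))
        = ι (nabla₀ h (nabla₀ e f)) + (B₀ (Ab h)) (nabla₀ e f) • v := by
      rw [n6 e f, map_add (nabla (ι h)), map_smul (nabla (ι h)), nvr (ι h), smul_zero,
        add_zero, n6 h (nabla₀ e f)]
    have e2 : nabla (ι e) (nabla (ι h) (ι f))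
        = ι (nabla₀ e (nabla₀ h f)) + (B₀ (Ab e)) (nabla₀ h f) • v := by
      rw [n6 h f, map_add (nabla (ι e)), map_smul (nabla (ι e)), nvr (ι e), smul_zero,
        add_zero, n6 e (nabla₀ h f)]
    have e3 : nabla ⁅ι e, ι h⁆ (ι f) = ι (nabla₀ ⁅e, h⁆ f) + (B₀ (Ab ⁅e, h⁆)) f • v := by
      rw [hbr2 e h, map_add nabla, LinearMap.add_apply, map_smul nabla, LinearMap.smul_apply,
        nvl (ι f), smul_zero, add_zero, n6 ⁅e, h⁆ f]
    rw [Topapp, e1, e2, e3]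
    simp only [map_add, map_smul, map_sub, πι, πv, smul_zero, add_zero]
  have r_ff : ∀ e f : g₀, ricci nabla (ι e) (ι f) = 0 := by
    intro e f
    rw [ric_g0, block_ff]
    exact hflat e f
  -- ### v cases
  have r_v1 : ∀ y : g, ricci nabla v y = 0 := by
    intro y
    rw [ricci_def]
    have hT : Top v y = 0 := by
      ext z
      rw [Topapp, nvl y, map_zero, nvl (nabla z y), br_vx z, map_zero]
      simp
    rw [hT, map_zero]
  have r_v2 : ∀ x : g, ricci nabla x v = 0 := by
    intro x
    rw [ricci_def]
    have hT : Top x v = 0 := by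
      ext z
      rw [Topapp, nvr x, map_zero, nvr z, map_zero, nvr ⁅x, z⁆]
      simp
    rw [hT, map_zero]
  -- ### more trace identities
  have tASflip : ∀ f : g₀, LinearMap.trace ℝ g₀ (A ∘ₗ S.flip f)
      = -(LinearMap.trace ℝ g₀ (A ∘ₗ (LieAlgebra.ad ℝ g₀ f : g₀ →ₗ[ℝ] g₀))) := by
    intro f
    have h := trpair (A ∘ₗ S.flip f) (-((LieAlgebra.ad ℝ g₀ f : g₀ →ₗ[ℝ] g₀) ∘ₗ A)) (by
      intro e w
      simp only [LinearMap.comp_apply, LinearMap.neg_apply, LinearMap.flip_apply,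
        LieAlgebra.ad_apply]
      rw [pA (S e f) w, hS e f (A w), map_neg])
    rw [h, map_neg, tr_comm (LieAlgebra.ad ℝ g₀ f : g₀ →ₗ[ℝ] g₀) A]
  have tDsSf : ∀ f : g₀, LinearMap.trace ℝ g₀ (Dstar ∘ₗ S f)
      = -(LinearMap.trace ℝ g₀ (D ∘ₗ S f)) := by
    intro f
    have h := trpair (Dstar ∘ₗ S f) (-(S f ∘ₗ D)) (by
      intro e w
      simp only [LinearMap.comp_apply, LinearMap.neg_apply]
      rw [hDstar (S f e) w, pSskew f e (D w), map_neg])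
    rw [h, map_neg, tr_comm (S f) D]
  have tSflipD : ∀ f : g₀, LinearMap.trace ℝ g₀ (S.flip f ∘ₗ D)
      = LinearMap.trace ℝ g₀ (Dstar ∘ₗ (LieAlgebra.ad ℝ g₀ f : g₀ →ₗ[ℝ] g₀)) := by
    intro f
    refine trpair _ _ ?_
    intro e w
    simp only [LinearMap.comp_apply, LinearMap.flip_apply, LieAlgebra.ad_apply]
    rw [hS (D e) f w, pD e ⁅f, w⁆]
  have hAbsub : Ab - Ab' = K := by
    ext x
    simp only [LinearMap.sub_apply, Abapp, Ab'app]
    module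
  have tSeAb : ∀ e : g₀, LinearMap.trace ℝ g₀ (S e ∘ₗ Ab)
      = (1/2) * LinearMap.trace ℝ g₀ (K ∘ₗ S e) := by
    intro e
    have h1 : LinearMap.trace ℝ g₀ (Ab ∘ₗ S e) = -(LinearMap.trace ℝ g₀ (Ab' ∘ₗ S e)) := by
      have h := trpair (Ab ∘ₗ S e) (-(S e ∘ₗ Ab')) (by
        intro x w
        simp only [LinearMap.comp_apply, LinearMap.neg_apply]
        rw [pAb (S e x) w, pSskew e x (Ab' w), map_neg])
      rw [h, map_neg, tr_comm (S e) Ab']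
    have h2 : LinearMap.trace ℝ g₀ (Ab ∘ₗ S e) - LinearMap.trace ℝ g₀ (Ab' ∘ₗ S e)
        = LinearMap.trace ℝ g₀ (K ∘ₗ S e) := by
      rw [← map_sub, ← LinearMap.sub_comp, hAbsub]
    rw [tr_comm (S e) Ab]
    linarith
  have tSflipAb : ∀ e : g₀, LinearMap.trace ℝ g₀ (S.flip e ∘ₗ Ab)
      = LinearMap.trace ℝ g₀ (Ab' ∘ₗ (LieAlgebra.ad ℝ g₀ e : g₀ →ₗ[ℝ] g₀)) := by
    intro e
    refine trpair _ _ ?_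
    intro x w
    simp only [LinearMap.comp_apply, LinearMap.flip_apply, LieAlgebra.ad_apply]
    rw [hS (Ab x) e w, pAb x ⁅e, w⁆]
  have hASf : ∀ f : g₀, A ∘ₗ S f = (1/2 : ℝ) • (D ∘ₗ S f - Dstar ∘ₗ S f - K ∘ₗ S f) := by
    intro f
    ext x
    simp only [LinearMap.comp_apply, LinearMap.smul_apply, LinearMap.sub_apply, Aapp]
  have hΔ' : ∀ e : g₀, (0:ℝ)
      = -(1/2) * (LinearMap.trace ℝ g₀ (D ∘ₗ (LieAlgebra.ad ℝ g₀ e : g₀ →ₗ[ℝ] g₀))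
          + LinearMap.trace ℝ g₀ (Dstar ∘ₗ (LieAlgebra.ad ℝ g₀ e : g₀ →ₗ[ℝ] g₀)))
        + (1/2) * (B₀ (D Z₀) e - B₀ (K Z₀) e)
        - (1/4) * LinearMap.trace ℝ g₀ (K ∘ₗ S e) := by
    intro e
    have h := hΔ e
    rw [hΔ0] at h
    simp only [map_zero, LinearMap.zero_apply] at h
    have hs1 : LinearMap.trace ℝ g₀ ((D + Dstar) ∘ₗ (LieAlgebra.ad ℝ g₀ e : g₀ →ₗ[ℝ] g₀))
        = LinearMap.trace ℝ g₀ (D ∘ₗ (LieAlgebra.ad ℝ g₀ e : g₀ →ₗ[ℝ] g₀))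
          + LinearMap.trace ℝ g₀ (Dstar ∘ₗ (LieAlgebra.ad ℝ g₀ e : g₀ →ₗ[ℝ] g₀)) := by
      rw [LinearMap.add_comp, map_add]
    have hs2 : B₀ ((D - K) Z₀) e = B₀ (D Z₀) e - B₀ (K Z₀) e := by
      rw [LinearMap.sub_apply, map_sub, LinearMap.sub_apply]
    linarith
  -- ### block (u, ι f)
  have block_uf : ∀ f : g₀, π ∘ₗ Top u (ι f) ∘ₗ ι
      = nabla₀.flip (A f) - A ∘ₗ nabla₀.flip f + nabla₀.flip f ∘ₗ D := by
    intro f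
    ext h
    simp only [LinearMap.comp_apply, LinearMap.add_apply, LinearMap.sub_apply,
      LinearMap.flip_apply]
    have e1 : nabla (ι h) (nabla u (ι f))
        = ι (nabla₀ h (A f)) + (B₀ (Ab h)) (A f) • v := by
      rw [n4 f, map_add (nabla (ι h)), map_smul (nabla (ι h)), nvr (ι h), smul_zero,
        add_zero, n6 h (A f)]
    have e2 : nabla u (nabla (ι h) (ι f))
        = ι (A (nabla₀ h f)) + (B₀ L) (nabla₀ h f) • v := by
      rw [n6 h f, map_add (nabla u), map_smul (nabla u), nvr u, smul_zero, add_zero,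
        n4 (nabla₀ h f)]
    have e3 : nabla ⁅u, ι h⁆ (ι f) = ι (nabla₀ (D h) f) + (B₀ (Ab (D h))) f • v := by
      rw [hbr1 h, map_add nabla, LinearMap.add_apply, map_smul nabla, LinearMap.smul_apply,
        nvl (ι f), smul_zero, add_zero, n6 (D h) f]
    rw [Topapp, e1, e2, e3]
    simp only [map_add, map_smul, map_sub, πι, πv, smul_zero, add_zero]
  have r_uf : ∀ f : g₀, ricci nabla u (ι f) = 0 := by
    intro f
    rw [ric_g0, block_uf]
    simp only [map_sub, map_add]
    rw [trFlip (A f)]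
    have h2 : LinearMap.trace ℝ g₀ (A ∘ₗ nabla₀.flip f)
        = -(1/2) * LinearMap.trace ℝ g₀ (A ∘ₗ S f) := by
      rw [flip0 f, LinearMap.comp_smul, map_smul, LinearMap.comp_add, LinearMap.comp_add,
        map_add, map_add, tASflip f]
      simp only [smul_eq_mul]
      try ring
    have h3 : LinearMap.trace ℝ g₀ (nabla₀.flip f ∘ₗ D)
        = -(1/2) * (LinearMap.trace ℝ g₀ (D ∘ₗ (LieAlgebra.ad ℝ g₀ f : g₀ →ₗ[ℝ] g₀))
          + LinearMap.trace ℝ g₀ (D ∘ₗ S f)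
          + LinearMap.trace ℝ g₀ (Dstar ∘ₗ (LieAlgebra.ad ℝ g₀ f : g₀ →ₗ[ℝ] g₀))) := by
      rw [flip0 f, LinearMap.smul_comp, map_smul, LinearMap.add_comp, LinearMap.add_comp,
        map_add, map_add, tSflipD f, tr_comm (LieAlgebra.ad ℝ g₀ f : g₀ →ₗ[ℝ] g₀) D,
        tr_comm (S f) D]
      simp only [smul_eq_mul]
      try ring
    have h4 : LinearMap.trace ℝ g₀ (A ∘ₗ S f)
        = LinearMap.trace ℝ g₀ (D ∘ₗ S f) - (1/2) * LinearMap.trace ℝ g₀ (K ∘ₗ S f) := by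
      rw [hASf f, map_smul]
      simp only [map_sub]
      rw [tDsSf f]
      simp only [smul_eq_mul]
      try ring
    have h5 : B₀ Z₀ (A f) = (1/2) * (-(B₀ (D Z₀) f) + (B₀ (K Z₀) f)) := by
      rw [Aapp f]
      simp only [map_smul, map_sub, smul_eq_mul]
      rw [BZD f, ← pD Z₀ f, pK Z₀ f]
      ring
    linarith [hΔ' f, h2, h3, h4, h5]
  -- ### block (ι e, u)
  have block_fu : ∀ e : g₀, π ∘ₗ Top (ι e) u ∘ₗ ι
      = -(nabla₀.flip (Ab e)) + nabla₀ e ∘ₗ Ab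
        - Ab ∘ₗ (LieAlgebra.ad ℝ g₀ e : g₀ →ₗ[ℝ] g₀) := by
    intro e
    ext h
    simp only [LinearMap.comp_apply, LinearMap.add_apply, LinearMap.sub_apply,
      LinearMap.neg_apply, LinearMap.flip_apply, LieAlgebra.ad_apply]
    have e1 : nabla (ι h) (nabla (ι e) u)
        = -(ι (nabla₀ h (Ab e)) + (B₀ (Ab h)) (Ab e) • v) := by
      rw [n5 e, map_neg (nabla (ι h)), n6 h (Ab e)]
    have e2 : nabla (ι e) (nabla (ι h) u)
        = -(ι (nabla₀ e (Ab h)) + (B₀ (Ab e)) (Ab h) • v) := by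
      rw [n5 h, map_neg (nabla (ι e)), n6 e (Ab h)]
    have e3 : nabla ⁅ι e, ι h⁆ u = -(ι (Ab ⁅e, h⁆)) := by
      rw [hbr2 e h, map_add nabla, LinearMap.add_apply, map_smul nabla, LinearMap.smul_apply,
        nvl u, smul_zero, add_zero, n5 ⁅e, h⁆]
    rw [Topapp, e1, e2, e3]
    simp only [map_neg, map_add, map_smul, map_sub, πι, πv, smul_zero, add_zero]
    abel
  have r_fu : ∀ e : g₀, ricci nabla (ι e) u = 0 := by
    intro e
    rw [ric_g0, block_fu]
    simp only [map_sub, map_add, map_neg]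
    rw [trFlip (Ab e)]
    have h1 : B₀ Z₀ (Ab e) = (1/2) * (B₀ (D Z₀) e - B₀ (K Z₀) e) := by
      rw [Abapp e]
      simp only [map_smul, map_add, map_sub, smul_eq_mul]
      rw [BZD e, ← pD Z₀ e, pK Z₀ e]
      ring
    have h2 : LinearMap.trace ℝ g₀ (nabla₀ e ∘ₗ Ab)
        = (1/2) * (LinearMap.trace ℝ g₀ (Ab ∘ₗ (LieAlgebra.ad ℝ g₀ e : g₀ →ₗ[ℝ] g₀))
          - LinearMap.trace ℝ g₀ (Ab' ∘ₗ (LieAlgebra.ad ℝ g₀ e : g₀ →ₗ[ℝ] g₀))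
          - (1/2) * LinearMap.trace ℝ g₀ (K ∘ₗ S e)) := by
      rw [nab0 e, LinearMap.smul_comp, map_smul, LinearMap.sub_comp, LinearMap.sub_comp,
        map_sub, map_sub, tSflipAb e, tSeAb e,
        tr_comm (LieAlgebra.ad ℝ g₀ e : g₀ →ₗ[ℝ] g₀) Ab]
      simp only [smul_eq_mul]
      try ring
    have hAbad : Ab ∘ₗ (LieAlgebra.ad ℝ g₀ e : g₀ →ₗ[ℝ] g₀)
        = (1/2 : ℝ) • (D ∘ₗ (LieAlgebra.ad ℝ g₀ e : g₀ →ₗ[ℝ] g₀)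
          + Dstar ∘ₗ (LieAlgebra.ad ℝ g₀ e : g₀ →ₗ[ℝ] g₀)
          + K ∘ₗ (LieAlgebra.ad ℝ g₀ e : g₀ →ₗ[ℝ] g₀)) := by
      ext x
      simp only [LinearMap.comp_apply, LinearMap.smul_apply, LinearMap.add_apply, Abapp]
    have hAb'ad : Ab' ∘ₗ (LieAlgebra.ad ℝ g₀ e : g₀ →ₗ[ℝ] g₀)
        = (1/2 : ℝ) • (D ∘ₗ (LieAlgebra.ad ℝ g₀ e : g₀ →ₗ[ℝ] g₀)
          + Dstar ∘ₗ (LieAlgebra.ad ℝ g₀ e : g₀ →ₗ[ℝ] g₀)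
          - K ∘ₗ (LieAlgebra.ad ℝ g₀ e : g₀ →ₗ[ℝ] g₀)) := by
      ext x
      simp only [LinearMap.comp_apply, LinearMap.smul_apply, LinearMap.add_apply,
        LinearMap.sub_apply, Ab'app]
    have h3 : LinearMap.trace ℝ g₀ (Ab ∘ₗ (LieAlgebra.ad ℝ g₀ e : g₀ →ₗ[ℝ] g₀))
        = (1/2) * (LinearMap.trace ℝ g₀ (D ∘ₗ (LieAlgebra.ad ℝ g₀ e : g₀ →ₗ[ℝ] g₀))
          + LinearMap.trace ℝ g₀ (Dstar ∘ₗ (LieAlgebra.ad ℝ g₀ e : g₀ →ₗ[ℝ] g₀))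
          + LinearMap.trace ℝ g₀ (K ∘ₗ (LieAlgebra.ad ℝ g₀ e : g₀ →ₗ[ℝ] g₀))) := by
      rw [hAbad, map_smul]
      simp only [map_add, smul_eq_mul]
    have h4 : LinearMap.trace ℝ g₀ (Ab' ∘ₗ (LieAlgebra.ad ℝ g₀ e : g₀ →ₗ[ℝ] g₀))
        = (1/2) * (LinearMap.trace ℝ g₀ (D ∘ₗ (LieAlgebra.ad ℝ g₀ e : g₀ →ₗ[ℝ] g₀))
          + LinearMap.trace ℝ g₀ (Dstar ∘ₗ (LieAlgebra.ad ℝ g₀ e : g₀ →ₗ[ℝ] g₀))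
          - LinearMap.trace ℝ g₀ (K ∘ₗ (LieAlgebra.ad ℝ g₀ e : g₀ →ₗ[ℝ] g₀))) := by
      rw [hAb'ad, map_smul]
      simp only [map_add, map_sub, smul_eq_mul]
    linarith [hΔ' e, h1, h2, h3, h4]
  -- ### bilinearity of ricci
  have Top_addl : ∀ x x' y : g, Top (x + x') y = Top x y + Top x' y := by
    intro x x' y
    ext z
    simp only [Topapp, LinearMap.add_apply, map_add, add_lie]
    abel
  have Top_smull : ∀ (c : ℝ) (x y : g), Top (c • x) y = c • Top x y := by
    intro c x y
    ext z
    simp only [Topapp, LinearMap.smul_apply, map_smul, smul_lie]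
    module
  have Top_addr : ∀ x y y' : g, Top x (y + y') = Top x y + Top x y' := by
    intro x y y'
    ext z
    simp only [Topapp, LinearMap.add_apply, map_add]
    abel
  have Top_smulr : ∀ (c : ℝ) (x y : g), Top x (c • y) = c • Top x y := by
    intro c x y
    ext z
    simp only [Topapp, LinearMap.smul_apply, map_smul]
    module
  have ric_addl : ∀ x x' y : g, ricci nabla (x + x') y = ricci nabla x y + ricci nabla x' y := by
    intro x x' y
    rw [ricci_def, ricci_def, ricci_def, Top_addl, map_add]
  have ric_smull : ∀ (c : ℝ) (x y : g), ricci nabla (c • x) y = c * ricci nabla x y := by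
    intro c x y
    rw [ricci_def, ricci_def, Top_smull, map_smul, smul_eq_mul]
  have ric_addr : ∀ x y y' : g, ricci nabla x (y + y') = ricci nabla x y + ricci nabla x y' := by
    intro x y y'
    rw [ricci_def, ricci_def, ricci_def, Top_addr, map_add]
  have ric_smulr : ∀ (c : ℝ) (x y : g), ricci nabla x (c • y) = c * ricci nabla x y := by
    intro c x y
    rw [ricci_def, ricci_def, Top_smulr, map_smul, smul_eq_mul]
  -- ### the Ricci formula
  have ric_formula : ∀ x y : g, ricci nabla x y = Γ * (B x v) * (B y v) := by
    intro x y
    obtain ⟨a, b, e, rfl⟩ := hspan x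
    obtain ⟨a', b', e', rfl⟩ := hspan y
    simp only [ric_addl, ric_smull, ric_addr, ric_smulr]
    simp only [r_uu, r_v1, r_v2, r_uf, r_fu, r_ff]
    simp only [map_add, map_smul, LinearMap.add_apply, LinearMap.smul_apply, smul_eq_mul,
      Buv, Bvv, Bιv]
    ring
  refine ⟨?_, ?_⟩
  · intro x y z
    rw [ric_formula, ric_formula, Bnv x y, Bnv x z]
    ring
  · intro hΓne
    have hRicx : ∀ x : g, Ric x = (Γ * B x v) • v := by
      intro x
      refine eqg _ _ ?_ ?_ ?_
      · rw [hRic x u, ric_formula x u]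
        simp only [map_smul, LinearMap.smul_apply, smul_eq_mul, Bvu, Buv]
        try ring
      · rw [hRic x v, ric_formula x v]
        simp only [map_smul, LinearMap.smul_apply, smul_eq_mul, Bvv]
        try ring
      · intro e
        rw [hRic x (ι e), ric_formula x (ι e)]
        simp only [map_smul, LinearMap.smul_apply, smul_eq_mul, Bιv, Bvι]
        try ring
    constructor
    · intro h0
      have h1 := hRicx u
      rw [h0] at h1
      have h3 := congrArg (fun w => B w u) h1
      simp only [LinearMap.zero_apply, map_zero, map_smul, LinearMap.smul_apply,
        smul_eq_mul, Bvu, Buv, mul_one] at h3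
      exact hΓne h3.symm
    · ext w
      simp only [LinearMap.comp_apply, LinearMap.zero_apply]
      rw [hRicx w, map_smul, hRicx v, Bvv]
      simp
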